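/- arXiv:0907.2059 — 2 statements merged into one kernel-verified Lean document; each statement's English description precedes it below -/
import Mathlib

section
/- If C is an evaluation context of Fx and M a term such that C[M] reduces to a value, then M itself reduces to a value. -/
/-- Exception names (a countable set, taken to be ℕ; the fixed bijection φ
with ℕ is the identity). -/
abbrev ExnName := ℕ

/-- Terms of Fx extended with the daimon ✠ and the test construction `M; N`. -/
inductive Tm : Type
  | var : ℕ → Tm
  | lam : Tm → Tm
  | app : Tm → Tm → Tm
  | raise : ExnName → Tm
  | tryc : Tm → ExnName → Tm → Tm
  | zero : Tm
  | succ : Tm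
  | natrec : Tm
  | nil : Tm
  | cons : Tm
  | foldr : Tm
  | daimon : Tm
  | seq : Tm → Tm → Tm
  deriving DecidableEq

namespace Tm

/-- Shifting of de Bruijn indices ≥ k. -/
def lift : ℕ → Tm → Tm
  | k, var i => if i < k then var i else var (i + 1)
  | k, lam M => lam (lift (k + 1) M)
  | k, app M N => app (lift k M) (lift k N)
  | k, tryc M e N => tryc (lift k M) e (lift k N)
  | k, seq M N => seq (lift k M) (lift k N)
  | _, raise e => raise e
  | _, zero => zero
  | _, succ => succ
  | _, natrec => natrec
  | _, nil => nil
  | _, cons => cons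
  | _, foldr => foldr
  | _, daimon => daimon

/-- Capture-avoiding substitution `M[k := N]` (de Bruijn). -/
def subst : ℕ → Tm → Tm → Tm
  | k, N, var i => if i = k then N else if k < i then var (i - 1) else var i
  | k, N, lam M => lam (subst (k + 1) (lift 0 N) M)
  | k, N, app M P => app (subst k N M) (subst k N P)
  | k, N, tryc M e P => tryc (subst k N M) e (subst k N P)
  | k, N, seq M P => seq (subst k N M) (subst k N P)
  | _, _, raise e => raise e
  | _, _, zero => zero
  | _, _, succ => succ
  | _, _, natrec => natrec
  | _, _, nil => nil
  | _, _, cons => cons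
  | _, _, foldr => foldr
  | _, _, daimon => daimon

end Tm

open Tm

/-- Regular values of Fx. -/
inductive RegVal : Tm → Prop
  | lam (M) : RegVal (lam M)
  | zero : RegVal zero
  | succ : RegVal succ
  | succApp (N) : RegVal (app succ N)
  | natrec : RegVal natrec
  | natrec1 (M) : RegVal (app natrec M)
  | natrec2 (M N) : RegVal (app (app natrec M) N)
  | nil : RegVal nil
  | cons : RegVal cons
  | cons1 (M) : RegVal (app cons M)
  | cons2 (M N) : RegVal (app (app cons M) N)
  | foldr : RegVal foldr
  | foldr1 (M) : RegVal (app foldr M)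
  | foldr2 (M N) : RegVal (app (app foldr M) N)

/-- Values: regular values, exceptions and the daimon. -/
def IsVal (V : Tm) : Prop := RegVal V ∨ (∃ e, V = raise e) ∨ V = daimon

/-- The notion of reduction ▷ of Fx extended with the daimon rules. -/
inductive Head : Tm → Tm → Prop
  | beta (M N) : Head (app (lam M) N) (subst 0 N M)
  | raiseApp (e M) : Head (app (raise e) M) (raise e)
  | tryCatch (e N) : Head (tryc (raise e) e N) N
  | tryOther (e e' N) : e ≠ e' → Head (tryc (raise e') e N) (raise e')
  | tryVal (V e N) : RegVal V → Head (tryc V e N) V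
  | recZero (X Y) : Head (app (app (app natrec X) Y) zero) X
  | recSucc (X Y N) :
      Head (app (app (app natrec X) Y) (app succ N))
        (app (app Y N) (app (app (app natrec X) Y) N))
  | recRaise (X Y e) : Head (app (app (app natrec X) Y) (raise e)) (raise e)
  | foldNil (X Y) : Head (app (app (app foldr X) Y) nil) X
  | foldCons (X Y E L) :
      Head (app (app (app foldr X) Y) (app (app cons E) L))
        (app (app (app Y E) L) (app (app (app foldr X) Y) L))
  | foldRaise (X Y e) : Head (app (app (app foldr X) Y) (raise e)) (raise e)
  | daimonApp (N) : Head (app daimon N) daimon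
  | tryDaimon (e N) : Head (tryc daimon e N) daimon
  | recDaimon (X Y) : Head (app (app (app natrec X) Y) daimon) daimon
  | foldDaimon (X Y) : Head (app (app (app foldr X) Y) daimon) daimon
  | seqDaimon (N) : Head (seq daimon N) N

/-- One-step reduction: compatible closure of ▷. -/
inductive Red : Tm → Tm → Prop
  | head {M N} : Head M N → Red M N
  | appL {M M' N} : Red M M' → Red (app M N) (app M' N)
  | appR {M N N'} : Red N N' → Red (app M N) (app M N')
  | lam {M M'} : Red M M' → Red (lam M) (lam M')
  | tryL {M M' e N} : Red M M' → Red (tryc M e N) (tryc M' e N)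
  | tryR {M e N N'} : Red N N' → Red (tryc M e N) (tryc M e N')
  | seqL {M M' N} : Red M M' → Red (seq M N) (seq M' N)
  | seqR {M N N'} : Red N N' → Red (seq M N) (seq M N')

/-- Many-step reduction. -/
abbrev RedStar : Tm → Tm → Prop := Relation.ReflTransGen Red

/-- Evaluation contexts of Fx. -/
inductive Ctx : Type
  | hole : Ctx
  | appl : Ctx → Tm → Ctx
  | tryd : Ctx → ExnName → Ctx
  | recd : Tm → Tm → Ctx → Ctx
  | foldd : Tm → Tm → Ctx → Ctx

namespace Ctx

/-- Filling the hole of a context with a term. -/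
def fill : Ctx → Tm → Tm
  | hole, M => M
  | appl C N, M => Tm.app (fill C M) N
  | tryd C e, M => Tm.tryc (fill C M) e Tm.daimon
  | recd X Y C, M => Tm.app (Tm.app (Tm.app Tm.natrec X) Y) (fill C M)
  | foldd X Y C, M => Tm.app (Tm.app (Tm.app Tm.foldr X) Y) (fill C M)

/-- Composition of contexts: `(C.comp D)[M] = C[D[M]]`. -/
def comp : Ctx → Ctx → Ctx
  | hole, D => D
  | appl C N, D => appl (comp C D) N
  | tryd C e, D => tryd (comp C D) e
  | recd X Y C, D => recd X Y (comp C D)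
  | foldd X Y C, D => foldd X Y (comp C D)

end Ctx

/-- Orthogonality: `M ⊥ C` iff `C[M] →* ✠`. -/
def Perp (M : Tm) (C : Ctx) : Prop := RedStar (C.fill M) Tm.daimon

/-- The orthogonal of a set of contexts. -/
def orth (S : Set Ctx) : Set Tm := { M | ∀ C ∈ S, Perp M C }

/-- `tryCtx Δ` is the context `try (… (try □ with ε₁ ↦ ✠) …) with εₙ ↦ ✠`,
for `Δ = {ε₁, …, εₙ}` enumerated in the order given by the fixed bijection
with ℕ (ε₁ innermost); it is the empty context when `Δ = ∅`. -/
def tryCtx (Δ : Finset ExnName) : Ctx := (Δ.sort (· ≤ ·)).foldl Ctx.tryd Ctx.hole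

/-- `lift_Δ(S)`: wrap each context of `S` inside the `try_Δ` handlers
(the handlers outermost). -/
def liftS (Δ : Finset ExnName) (S : Set Ctx) : Set Ctx :=
  (fun C => (tryCtx Δ).comp C) '' S

/-- `unlift_Δ(S)`: plug the `try_Δ` handlers inside each context of `S`. -/
def unliftS (Δ : Finset ExnName) (S : Set Ctx) : Set Ctx :=
  (fun C => C.comp (tryCtx Δ)) '' S

namespace FillProof

open Tm Ctx

lemma regval_fill : ∀ (C : Ctx) (M : Tm), RegVal (C.fill M) → RegVal M := by
  intro C
  induction C with
  | hole => intro M h; exact h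
  | appl C N ih =>
    intro M h
    simp only [Ctx.fill] at h
    generalize hA : C.fill M = A at h
    cases h with
    | succApp => exact ih M (hA ▸ RegVal.succ)
    | natrec1 => exact ih M (hA ▸ RegVal.natrec)
    | natrec2 X => exact ih M (hA ▸ RegVal.natrec1 X)
    | cons1 => exact ih M (hA ▸ RegVal.cons)
    | cons2 X => exact ih M (hA ▸ RegVal.cons1 X)
    | foldr1 => exact ih M (hA ▸ RegVal.foldr)
    | foldr2 X => exact ih M (hA ▸ RegVal.foldr1 X)
  | tryd C e ih => intro M h; simp only [Ctx.fill] at h; cases h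
  | recd X Y C ih => intro M h; simp only [Ctx.fill] at h; cases h
  | foldd X Y C ih => intro M h; simp only [Ctx.fill] at h; cases h

lemma isval_fill (C : Ctx) (M : Tm) (h : IsVal (C.fill M)) : IsVal M := by
  rcases h with h | ⟨e, h⟩ | h
  · exact Or.inl (regval_fill C M h)
  · cases C <;> simp [Ctx.fill] at h
    exact Or.inr (Or.inl ⟨e, h⟩)
  · cases C <;> simp [Ctx.fill] at h
    exact Or.inr (Or.inr h)

end FillProof

namespace FillProof

lemma no_red_natrec {P : Tm} (h : Red Tm.natrec P) : False := by
  cases h with | head h => cases h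

lemma no_red_foldr {P : Tm} (h : Red Tm.foldr P) : False := by
  cases h with | head h => cases h

lemma no_red_daimon {P : Tm} (h : Red Tm.daimon P) : False := by
  cases h with | head h => cases h

/-- `M` is a value (so `M` trivially has a value). -/
lemma val_done {M : Tm} (h : IsVal M) : ∃ W, IsVal W ∧ RedStar M W :=
  ⟨M, h, Relation.ReflTransGen.refl⟩

lemma regval_done {C : Ctx} {M : Tm} (h : RegVal (C.fill M)) :
    ∃ W, IsVal W ∧ RedStar M W :=
  val_done (Or.inl (regval_fill C M h))

lemma step (C : Ctx) (M P : Tm) (h : Red (C.fill M) P) :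
    (∃ W, IsVal W ∧ RedStar M W) ∨ ∃ (C' : Ctx) (M' : Tm), P = C'.fill M' ∧ RedStar M M' := by
  induction C generalizing P with
  | hole =>
    exact Or.inr ⟨Ctx.hole, P, rfl, Relation.ReflTransGen.single h⟩
  | appl C N ih =>
    simp only [Ctx.fill] at h
    cases h with
    | head hd =>
      generalize hA : C.fill M = A at hd
      cases hd with
      | beta M₀ N₀ =>
        have : C = Ctx.hole ∧ M = Tm.lam M₀ := by
          cases C <;> simp_all [Ctx.fill]
        exact Or.inl (val_done (Or.inl (this.2 ▸ RegVal.lam M₀)))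
      | raiseApp e _ =>
        have : C = Ctx.hole ∧ M = Tm.raise e := by
          cases C <;> simp_all [Ctx.fill]
        exact Or.inl (val_done (Or.inr (Or.inl ⟨e, this.2⟩)))
      | daimonApp _ =>
        have : C = Ctx.hole ∧ M = Tm.daimon := by
          cases C <;> simp_all [Ctx.fill]
        exact Or.inl (val_done (Or.inr (Or.inr this.2)))
      | recZero => exact Or.inl (regval_done (hA ▸ RegVal.natrec2 _ _))
      | recSucc => exact Or.inl (regval_done (hA ▸ RegVal.natrec2 _ _))
      | recRaise => exact Or.inl (regval_done (hA ▸ RegVal.natrec2 _ _))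
      | recDaimon => exact Or.inl (regval_done (hA ▸ RegVal.natrec2 _ _))
      | foldNil => exact Or.inl (regval_done (hA ▸ RegVal.foldr2 _ _))
      | foldCons => exact Or.inl (regval_done (hA ▸ RegVal.foldr2 _ _))
      | foldRaise => exact Or.inl (regval_done (hA ▸ RegVal.foldr2 _ _))
      | foldDaimon => exact Or.inl (regval_done (hA ▸ RegVal.foldr2 _ _))
    | appL h' =>
      rcases ih _ h' with h | ⟨C', M', rfl, hMM'⟩
      · exact Or.inl h
      · exact Or.inr ⟨Ctx.appl C' N, M', rfl, hMM'⟩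
    | appR h' =>
      exact Or.inr ⟨Ctx.appl C _, M, rfl, Relation.ReflTransGen.refl⟩
  | tryd C e ih =>
    simp only [Ctx.fill] at h
    cases h with
    | head hd =>
      generalize hA : C.fill M = A at hd
      cases hd with
      | tryCatch e _ =>
        have : C = Ctx.hole ∧ M = Tm.raise e := by
          cases C <;> simp_all [Ctx.fill]
        exact Or.inl (val_done (Or.inr (Or.inl ⟨e, this.2⟩)))
      | tryOther e e' _ hne =>
        have : C = Ctx.hole ∧ M = Tm.raise e' := by
          cases C <;> simp_all [Ctx.fill]
        exact Or.inl (val_done (Or.inr (Or.inl ⟨e', this.2⟩)))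
      | tryVal V _ _ hV => exact Or.inl (regval_done (hA ▸ hV))
      | tryDaimon _ _ =>
        have : C = Ctx.hole ∧ M = Tm.daimon := by
          cases C <;> simp_all [Ctx.fill]
        exact Or.inl (val_done (Or.inr (Or.inr this.2)))
    | tryL h' =>
      rcases ih _ h' with h | ⟨C', M', rfl, hMM'⟩
      · exact Or.inl h
      · exact Or.inr ⟨Ctx.tryd C' e, M', rfl, hMM'⟩
    | tryR h' => exact absurd h' no_red_daimon
  | recd X Y C ih =>
    simp only [Ctx.fill] at h
    cases h with
    | head hd =>
      generalize hA : C.fill M = A at hd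
      cases hd with
      | recZero =>
        have : C = Ctx.hole ∧ M = Tm.zero := by
          cases C <;> simp_all [Ctx.fill]
        exact Or.inl (val_done (Or.inl (this.2 ▸ RegVal.zero)))
      | recSucc _ _ N₀ => exact Or.inl (regval_done (hA ▸ RegVal.succApp N₀))
      | recRaise _ _ e' =>
        have : C = Ctx.hole ∧ M = Tm.raise e' := by
          cases C <;> simp_all [Ctx.fill]
        exact Or.inl (val_done (Or.inr (Or.inl ⟨e', this.2⟩)))
      | recDaimon =>
        have : C = Ctx.hole ∧ M = Tm.daimon := by
          cases C <;> simp_all [Ctx.fill]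
        exact Or.inl (val_done (Or.inr (Or.inr this.2)))
    | appL h' =>
      cases h' with
      | head hd => cases hd
      | appL h'' =>
        cases h'' with
        | head hd => cases hd
        | appL h''' => exact absurd h''' no_red_natrec
        | appR h''' =>
          exact Or.inr ⟨Ctx.recd _ Y C, M, rfl, Relation.ReflTransGen.refl⟩
      | appR h'' =>
        exact Or.inr ⟨Ctx.recd X _ C, M, rfl, Relation.ReflTransGen.refl⟩
    | appR h' =>
      rcases ih _ h' with h | ⟨C', M', rfl, hMM'⟩
      · exact Or.inl h
      · exact Or.inr ⟨Ctx.recd X Y C', M', rfl, hMM'⟩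
  | foldd X Y C ih =>
    simp only [Ctx.fill] at h
    cases h with
    | head hd =>
      generalize hA : C.fill M = A at hd
      cases hd with
      | foldNil =>
        have : C = Ctx.hole ∧ M = Tm.nil := by
          cases C <;> simp_all [Ctx.fill]
        exact Or.inl (val_done (Or.inl (this.2 ▸ RegVal.nil)))
      | foldCons _ _ E L => exact Or.inl (regval_done (hA ▸ RegVal.cons2 E L))
      | foldRaise _ _ e' =>
        have : C = Ctx.hole ∧ M = Tm.raise e' := by
          cases C <;> simp_all [Ctx.fill]
        exact Or.inl (val_done (Or.inr (Or.inl ⟨e', this.2⟩)))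
      | foldDaimon =>
        have : C = Ctx.hole ∧ M = Tm.daimon := by
          cases C <;> simp_all [Ctx.fill]
        exact Or.inl (val_done (Or.inr (Or.inr this.2)))
    | appL h' =>
      cases h' with
      | head hd => cases hd
      | appL h'' =>
        cases h'' with
        | head hd => cases hd
        | appL h''' => exact absurd h''' no_red_foldr
        | appR h''' =>
          exact Or.inr ⟨Ctx.foldd _ Y C, M, rfl, Relation.ReflTransGen.refl⟩
      | appR h'' =>
        exact Or.inr ⟨Ctx.foldd X _ C, M, rfl, Relation.ReflTransGen.refl⟩
    | appR h' =>
      rcases ih _ h' with h | ⟨C', M', rfl, hMM'⟩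
      · exact Or.inl h
      · exact Or.inr ⟨Ctx.foldd X Y C', M', rfl, hMM'⟩

end FillProof

/-- If `C[M]` reduces to a value, then `M` reduces to a value. -/
theorem value_of_fill_value (C : Ctx) (M : Tm)
    (h : ∃ V, IsVal V ∧ RedStar (C.fill M) V) : ∃ W, IsVal W ∧ RedStar M W := by
  obtain ⟨V, hV, hred⟩ := h
  have key : ∀ a, RedStar a V → ∀ (C : Ctx) (M : Tm), a = C.fill M → ∃ W, IsVal W ∧ RedStar M W := by
    intro a ha
    induction ha using Relation.ReflTransGen.head_induction_on with
    | refl =>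
      rintro C M rfl
      exact ⟨M, FillProof.isval_fill C M hV, Relation.ReflTransGen.refl⟩
    | head hstep _ ih =>
      rintro C M rfl
      rcases FillProof.step C M _ hstep with h | ⟨C', M', rfl, hMM'⟩
      · exact h
      · obtain ⟨W, hW, hr⟩ := ih C' M' rfl
        exact ⟨W, hW, hMM'.trans hr⟩
  exact key _ hred C M rfl
end

section
/- Lifting lemma: for any set S of contexts and finite sets Δ, Δ' of exception names, (lift_Δ(lift_{Δ'}(S)))^⊥ = (lift_{Δ∪Δ'}(S))^⊥, where lift_Δ(S) = { try_Δ(C) | C ∈ S } wraps each context in the try-handlers for all exceptions in Δ with handler ✠. -/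
open Tm

section Aux

open Tm

lemma not_red_daimon {W : Tm} (h : Red Tm.daimon W) : False := by
  cases h with | head h => cases h

lemma not_red_raise {e : ExnName} {W : Tm} (h : Red (Tm.raise e) W) : False := by
  cases h with | head h => cases h

lemma not_red_atom {t W : Tm}
    (ht : t = Tm.succ ∨ t = Tm.natrec ∨ t = Tm.cons ∨ t = Tm.foldr ∨
      t = Tm.zero ∨ t = Tm.nil) (h : Red t W) : False := by
  rcases ht with rfl | rfl | rfl | rfl | rfl | rfl <;>
    cases h with | head h => cases h

lemma redstar_raise_eq {e : ExnName} {W : Tm} (h : RedStar (Tm.raise e) W) :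
    W = Tm.raise e := by
  cases h.cases_head with
  | inl h => exact h.symm
  | inr h => exact absurd h.choose_spec.1 not_red_raise

lemma redstar_daimon_eq {W : Tm} (h : RedStar Tm.daimon W) : W = Tm.daimon := by
  cases h.cases_head with
  | inl h => exact h.symm
  | inr h => exact absurd h.choose_spec.1 not_red_daimon

/-- One-step reduction preserves regular values. -/
lemma regval_red {V W : Tm} (h : Red V W) (hv : RegVal V) : RegVal W := by
  cases hv with
  | lam M =>
    cases h with
    | head h => cases h
    | lam h => exact RegVal.lam _
  | zero => exact absurd h (not_red_atom (by simp))
  | succ => exact absurd h (not_red_atom (by simp))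
  | natrec => exact absurd h (not_red_atom (by simp))
  | nil => exact absurd h (not_red_atom (by simp))
  | cons => exact absurd h (not_red_atom (by simp))
  | foldr => exact absurd h (not_red_atom (by simp))
  | succApp N =>
    cases h with
    | head h => cases h
    | appL h => exact absurd h (not_red_atom (by simp))
    | appR h => exact RegVal.succApp _
  | natrec1 M =>
    cases h with
    | head h => cases h
    | appL h => exact absurd h (not_red_atom (by simp))
    | appR h => exact RegVal.natrec1 _
  | natrec2 M N =>
    cases h with
    | head h => cases h
    | appL h =>
      cases h with
      | head h => cases h
      | appL h => exact absurd h (not_red_atom (by simp))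
      | appR h => exact RegVal.natrec2 _ _
    | appR h => exact RegVal.natrec2 _ _
  | cons1 M =>
    cases h with
    | head h => cases h
    | appL h => exact absurd h (not_red_atom (by simp))
    | appR h => exact RegVal.cons1 _
  | cons2 M N =>
    cases h with
    | head h => cases h
    | appL h =>
      cases h with
      | head h => cases h
      | appL h => exact absurd h (not_red_atom (by simp))
      | appR h => exact RegVal.cons2 _ _
    | appR h => exact RegVal.cons2 _ _
  | foldr1 M =>
    cases h with
    | head h => cases h
    | appL h => exact absurd h (not_red_atom (by simp))
    | appR h => exact RegVal.foldr1 _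
  | foldr2 M N =>
    cases h with
    | head h => cases h
    | appL h =>
      cases h with
      | head h => cases h
      | appL h => exact absurd h (not_red_atom (by simp))
      | appR h => exact RegVal.foldr2 _ _
    | appR h => exact RegVal.foldr2 _ _

lemma regval_redstar {V W : Tm} (h : RedStar V W) (hv : RegVal V) : RegVal W := by
  induction h with
  | refl => exact hv
  | tail _ h ih => exact regval_red h ih

lemma regval_not_daimon {V : Tm} (hv : RegVal V) : V ≠ Tm.daimon := by
  cases hv <;> simp

lemma regval_not_raise {V : Tm} (hv : RegVal V) (e : ExnName) : V ≠ Tm.raise e := by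
  cases hv <;> simp

lemma redstar_tryL {M M' : Tm} {e : ExnName} {N : Tm} (h : RedStar M M') :
    RedStar (Tm.tryc M e N) (Tm.tryc M' e N) :=
  Relation.ReflTransGen.lift (fun t => Tm.tryc t e N) (fun _ _ h => Red.tryL h) _ _ h

/-- Inversion: if `try M with e ↦ ✠` reduces to ✠ then `M` reduces to ✠ or
to `raise e`. -/
lemma try_daimon_inv : ∀ {t : Tm}, RedStar t Tm.daimon → ∀ M e,
    t = Tm.tryc M e Tm.daimon → RedStar M Tm.daimon ∨ RedStar M (Tm.raise e) := by
  intro t h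
  induction h using Relation.ReflTransGen.head_induction_on with
  | refl => intro M e heq; exact absurd heq (by simp)
  | head h' hrest ih =>
    intro M e heq
    subst heq
    cases h' with
    | head hh =>
      cases hh with
      | tryCatch => exact Or.inr Relation.ReflTransGen.refl
      | tryOther _ _ _ hne =>
        exact absurd (redstar_raise_eq hrest) (by simp)
      | tryVal V _ _ hV => exact Or.inl hrest
      | tryDaimon => exact Or.inl Relation.ReflTransGen.refl
    | tryL hM =>
      rcases ih _ _ rfl with h1 | h1
      · exact Or.inl (Relation.ReflTransGen.head hM h1)
      · exact Or.inr (Relation.ReflTransGen.head hM h1)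
    | tryR hN => exact absurd hN not_red_daimon

/-- Inversion: if `try M with e ↦ ✠` reduces to `raise f` then `M` reduces to
`raise f` and `f ≠ e`. -/
lemma try_raise_inv : ∀ {t : Tm}, RedStar t Tm.daimon → True := fun _ => trivial

lemma try_raise_inv' : ∀ {t : Tm} {f : ExnName}, RedStar t (Tm.raise f) → ∀ M e,
    t = Tm.tryc M e Tm.daimon → RedStar M (Tm.raise f) ∧ f ≠ e := by
  intro t f h
  induction h using Relation.ReflTransGen.head_induction_on with
  | refl => intro M e heq; exact absurd heq (by simp)
  | head h' hrest ih =>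
    intro M e heq
    subst heq
    cases h' with
    | head hh =>
      cases hh with
      | tryCatch => exact absurd (redstar_daimon_eq hrest) (by simp)
      | tryOther _ e' _ hne =>
        have := redstar_raise_eq hrest
        have hfe : f = e' := by injection this
        subst hfe
        exact ⟨Relation.ReflTransGen.refl, fun h => hne h.symm⟩
      | tryVal V _ _ hV =>
        have := regval_redstar hrest hV
        cases this
      | tryDaimon => exact absurd (redstar_daimon_eq hrest) (by simp)
    | tryL hM =>
      rcases ih _ _ rfl with ⟨h1, h2⟩
      exact ⟨Relation.ReflTransGen.head hM h1, h2⟩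
    | tryR hN => exact absurd hN not_red_daimon

/-- `tryFold l P` : `P` wrapped in try-handlers for the names in `l`
(head of `l` innermost). -/
def tryFold (l : List ExnName) (P : Tm) : Tm :=
  l.foldl (fun t e => Tm.tryc t e Tm.daimon) P

lemma tryFold_nil (P : Tm) : tryFold [] P = P := rfl

lemma tryFold_cons (e : ExnName) (l : List ExnName) (P : Tm) :
    tryFold (e :: l) P = tryFold l (Tm.tryc P e Tm.daimon) := rfl

lemma try_raise_iff {M : Tm} {e f : ExnName} :
    RedStar (Tm.tryc M e Tm.daimon) (Tm.raise f) ↔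
      RedStar M (Tm.raise f) ∧ f ≠ e := by
  constructor
  · intro h; exact try_raise_inv' h M e rfl
  · rintro ⟨h, hne⟩
    exact (redstar_tryL h).tail (Red.head (Head.tryOther e f _ (fun h => hne h.symm)))

lemma try_daimon_iff {M : Tm} {e : ExnName} :
    RedStar (Tm.tryc M e Tm.daimon) Tm.daimon ↔
      RedStar M Tm.daimon ∨ RedStar M (Tm.raise e) := by
  constructor
  · intro h; exact try_daimon_inv h M e rfl
  · rintro (h | h)
    · exact (redstar_tryL h).tail (Red.head (Head.tryDaimon e Tm.daimon))
    · exact (redstar_tryL h).tail (Red.head (Head.tryCatch e Tm.daimon))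

lemma tryFold_raise_iff (l : List ExnName) : ∀ (P : Tm) (f : ExnName),
    RedStar (tryFold l P) (Tm.raise f) ↔ RedStar P (Tm.raise f) ∧ f ∉ l := by
  induction l with
  | nil => intro P f; simp [tryFold_nil]
  | cons e l ih =>
    intro P f
    rw [tryFold_cons, ih, try_raise_iff]
    simp only [List.mem_cons]
    constructor
    · rintro ⟨⟨h1, h2⟩, h3⟩
      exact ⟨h1, by rintro (rfl | h) <;> [exact h2 rfl; exact h3 h]⟩
    · rintro ⟨h1, h2⟩
      exact ⟨⟨h1, fun h => h2 (Or.inl h)⟩, fun h => h2 (Or.inr h)⟩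

lemma tryFold_daimon_iff (l : List ExnName) : ∀ (P : Tm),
    RedStar (tryFold l P) Tm.daimon ↔
      RedStar P Tm.daimon ∨ ∃ e ∈ l, RedStar P (Tm.raise e) := by
  induction l with
  | nil => intro P; simp [tryFold_nil]
  | cons e l ih =>
    intro P
    rw [tryFold_cons, ih, try_daimon_iff]
    constructor
    · rintro ((h | h) | ⟨f, hf, h⟩)
      · exact Or.inl h
      · exact Or.inr ⟨e, List.mem_cons_self, h⟩
      · rw [try_raise_iff] at h
        exact Or.inr ⟨f, List.mem_cons_of_mem _ hf, h.1⟩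
    · rintro (h | ⟨f, hf, h⟩)
      · exact Or.inl (Or.inl h)
      · rcases List.mem_cons.mp hf with rfl | hf
        · exact Or.inl (Or.inr h)
        · by_cases hfe : f = e
          · subst hfe; exact Or.inl (Or.inr h)
          · exact Or.inr ⟨f, hf, by rw [try_raise_iff]; exact ⟨h, hfe⟩⟩

lemma tryFold_daimon_iff' (l : List ExnName) (P : Tm) :
    RedStar (tryFold l P) Tm.daimon ↔
      RedStar P Tm.daimon ∨ ∃ e ∈ l, RedStar P (Tm.raise e) := tryFold_daimon_iff l P

lemma fill_comp (C D : Ctx) (M : Tm) :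
    (C.comp D).fill M = C.fill (D.fill M) := by
  induction C <;> simp [Ctx.comp, Ctx.fill, *]

lemma fill_foldl (l : List ExnName) : ∀ (C : Ctx) (P : Tm),
    (l.foldl Ctx.tryd C).fill P = tryFold l (C.fill P) := by
  induction l with
  | nil => intro C P; rfl
  | cons e l ih =>
    intro C P
    simp only [List.foldl_cons, ih, tryFold_cons, Ctx.fill]

lemma fill_tryCtx (Δ : Finset ExnName) (P : Tm) :
    (tryCtx Δ).fill P = tryFold (Δ.sort (· ≤ ·)) P := by
  rw [tryCtx, fill_foldl]; rfl

lemma tryCtx_daimon_iff (Δ : Finset ExnName) (P : Tm) :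
    RedStar ((tryCtx Δ).fill P) Tm.daimon ↔
      RedStar P Tm.daimon ∨ ∃ e ∈ Δ, RedStar P (Tm.raise e) := by
  rw [fill_tryCtx, tryFold_daimon_iff]
  simp [Finset.mem_sort]

lemma key (P : Tm) (Δ Δ' : Finset ExnName) :
    RedStar ((tryCtx Δ).fill ((tryCtx Δ').fill P)) Tm.daimon ↔
      RedStar ((tryCtx (Δ ∪ Δ')).fill P) Tm.daimon := by
  rw [tryCtx_daimon_iff, tryCtx_daimon_iff, tryCtx_daimon_iff]
  rw [fill_tryCtx]
  constructor
  · rintro ((h | ⟨e, he, h⟩) | ⟨e, he, h⟩)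
    · exact Or.inl h
    · exact Or.inr ⟨e, Finset.mem_union_right _ he, h⟩
    · rw [tryFold_raise_iff] at h
      exact Or.inr ⟨e, Finset.mem_union_left _ he, h.1⟩
  · rintro (h | ⟨e, he, h⟩)
    · exact Or.inl (Or.inl h)
    · rcases Finset.mem_union.mp he with he | he
      · by_cases he' : e ∈ Δ'
        · exact Or.inl (Or.inr ⟨e, he', h⟩)
        · refine Or.inr ⟨e, he, ?_⟩
          rw [tryFold_raise_iff]
          exact ⟨h, by simpa [Finset.mem_sort] using he'⟩
      · exact Or.inl (Or.inr ⟨e, he, h⟩)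

end Aux

/-- Lifting lemma: `(lift_Δ(lift_Δ'(S)))^⊥ = (lift_{Δ∪Δ'}(S))^⊥`. -/
theorem orth_lift_lift (S : Set Ctx) (Δ Δ' : Finset ExnName) :
    orth (liftS Δ (liftS Δ' S)) = orth (liftS (Δ ∪ Δ') S) := by
  ext M
  constructor
  · intro h D hD
    obtain ⟨C, hC, rfl⟩ := hD
    have h1 := h ((tryCtx Δ).comp ((tryCtx Δ').comp C))
      ⟨(tryCtx Δ').comp C, ⟨C, hC, rfl⟩, rfl⟩
    unfold Perp at h1 ⊢
    rw [fill_comp, fill_comp] at h1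
    rw [fill_comp]
    exact (key _ Δ Δ').mp h1
  · intro h D hD
    obtain ⟨D', ⟨C, hC, rfl⟩, rfl⟩ := hD
    have h1 := h ((tryCtx (Δ ∪ Δ')).comp C) ⟨C, hC, rfl⟩
    unfold Perp at h1 ⊢
    rw [fill_comp] at h1
    rw [fill_comp, fill_comp]
    exact (key _ Δ Δ').mpr h1
end
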